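/- Soundness of prophecy introduction for ∀∃ (n = 1): K ⊨ ∀π₁.∃π₂.ψ if and only if K^P ⊨ ∀π₁.∃π₂.((X G ⋀_{ξ∈Ξ₁} ((p^ξ)_{π₁} ↔ ξ)) → ψ), where Ξ₁ is a finite set of LTL prophecy formulas over trace variable π₁, P contains a fresh atomic proposition p^ξ for each ξ ∈ Ξ₁, and K^P is the prophecy-extended structure. -/

import Mathlib

/-- Syntax of LTL formulas over atomic propositions `α` (with a primitive
`true` constant). -/
inductive LTL (α : Type) where
  | tt : LTL α
  | atom : α → LTL α
  | conj : LTL α → LTL α → LTL α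
  | neg : LTL α → LTL α
  | next : LTL α → LTL α
  | untl : LTL α → LTL α → LTL α

/-- Satisfaction of an LTL formula on a trace `t : ℕ → Set α` at position `i`. -/
def LTL.sat {α : Type} (t : ℕ → Set α) : ℕ → LTL α → Prop
  | _, .tt => True
  | i, .atom a => a ∈ t i
  | i, .conj φ ψ => LTL.sat t i φ ∧ LTL.sat t i ψ
  | i, .neg φ => ¬ LTL.sat t i φ
  | i, .next φ => LTL.sat t (i + 1) φ
  | i, .untl φ ψ =>
      ∃ k, i ≤ k ∧ LTL.sat t k ψ ∧ ∀ j, i ≤ j → j < k → LTL.sat t j φ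

/-- Paths of a Kripke structure. -/
def IsKPath {St D : Type} (init : St) (κ : St → D → St) (τ : ℕ → St) : Prop :=
  τ 0 = init ∧ ∀ i, ∃ d : D, τ (i + 1) = κ (τ i) d

/-- The trace set of a Kripke structure. -/
def KTraces {St D α : Type} (init : St) (κ : St → D → St) (ℓ : St → Set α) :
    Set (ℕ → Set α) :=
  {t | ∃ τ : ℕ → St, IsKPath init κ τ ∧ ∀ i, t i = ℓ (τ i)}

/-- Combine a list of `n` traces (for trace variables `π₁, …, π_n`, in order)
into one trace over variable-indexed atomic propositions `α × Fin n`. -/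
def zipTraces {α : Type} (n : ℕ) (ts : List (ℕ → Set α)) : ℕ → Set (α × Fin n) :=
  fun k => {x | x.1 ∈ ts.getD x.2.val (fun _ => (∅ : Set α)) k}

/-- Renaming of atomic propositions in an LTL formula. -/
def LTL.map {α β : Type} (f : α → β) : LTL α → LTL β
  | .tt => .tt
  | .atom a => .atom (f a)
  | .conj φ ψ => .conj (φ.map f) (ψ.map f)
  | .neg φ => .neg (φ.map f)
  | .next φ => .next (φ.map f)
  | .untl φ ψ => .untl (φ.map f) (ψ.map f)

/-- Derived eventually, globally, implication, biimplication, conjunction of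
a list. -/
def LTL.ev {α : Type} (ψ : LTL α) : LTL α := .untl .tt ψ
def LTL.glob {α : Type} (ψ : LTL α) : LTL α := .neg (LTL.ev (.neg ψ))
def LTL.imp {α : Type} (φ ψ : LTL α) : LTL α := .neg (.conj φ (.neg ψ))
def LTL.biimp {α : Type} (φ ψ : LTL α) : LTL α := .conj (φ.imp ψ) (ψ.imp φ)
def LTL.conjList {α : Type} (l : List (LTL α)) : LTL α := l.foldr .conj .tt

/-- All atomic propositions occurring in the formula satisfy `P`. -/
def LTL.OnlyOn {α : Type} (P : α → Prop) : LTL α → Prop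
  | .tt => True
  | .atom a => P a
  | .conj φ ψ => φ.OnlyOn P ∧ ψ.OnlyOn P
  | .neg φ => φ.OnlyOn P
  | .next φ => φ.OnlyOn P
  | .untl φ ψ => φ.OnlyOn P ∧ ψ.OnlyOn P

/-- Transition function of the prophecy-extended structure `K^P`: states are
pairs of a state of `K` and a valuation of the prophecy variables; a direction
`(d, A)` moves the `K`-component along `d` and sets the prophecy valuation of
the successor to `A` (the valuation stored at the source is irrelevant, as for
the dedicated initial state). -/
def kPStep {St D P : Type} (κ : St → D → St) :
    St × Set P → D × Set P → St × Set P :=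
  fun sA dA => (κ sA.1 dA.1, dA.2)

/-- Labeling of `K^P` over `AP ⊎ P`: the original label of the `K`-component
together with the currently true prophecy variables. -/
def kPLabel {St α P : Type} (ℓ : St → Set α) : St × Set P → Set (α ⊕ P) :=
  fun sA => Sum.inl '' ℓ sA.1 ∪ Sum.inr '' sA.2

/-- Projection of a trace over `AP ⊎ P` to a trace over `AP`. -/
def projTrace {α P : Type} (t : ℕ → Set (α ⊕ P)) : ℕ → Set α :=
  fun i => {a | Sum.inl a ∈ t i}

/-- Embedding of `{π₁,π₂}`-indexed original atomic propositions into the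
prophecy-extended alphabet. -/
def embed2 {α : Type} (m : ℕ) : α × Fin 2 → (α ⊕ Fin m) × Fin 2 :=
  fun x => (Sum.inl x.1, x.2)

/-- The premise `X G ⋀_{ξ ∈ Ξ₁} ((p^ξ)_{π₁} ↔ ξ)`: from the next step on,
each prophecy variable `p^ξ` (read on trace `π₁`) holds iff the prophecy
formula `ξ` holds. -/
def prophPremise2 {α : Type} (Ξ : List (LTL (α × Fin 2))) :
    LTL ((α ⊕ Fin Ξ.length) × Fin 2) :=
  .next (LTL.glob (LTL.conjList ((List.finRange Ξ.length).map fun k =>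
    LTL.biimp (.atom (Sum.inr k, (0 : Fin 2))) ((Ξ.get k).map (embed2 Ξ.length)))))

section ProphAux

lemma sat_map {α β : Type} (f : α → β) (φ : LTL α) (t : ℕ → Set β) (i : ℕ) :
    LTL.sat t i (φ.map f) ↔ LTL.sat (fun j => f ⁻¹' t j) i φ := by
  induction φ generalizing i with
  | tt => simp [LTL.map, LTL.sat]
  | atom a => simp [LTL.map, LTL.sat]
  | conj φ ψ ih1 ih2 => simp [LTL.map, LTL.sat, ih1, ih2]
  | neg φ ih => simp [LTL.map, LTL.sat, ih]
  | next φ ih => simp [LTL.map, LTL.sat, ih]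
  | untl φ ψ ih1 ih2 => simp [LTL.map, LTL.sat, ih1, ih2]

lemma sat_congr {α : Type} (P : α → Prop) (φ : LTL α) (t t' : ℕ → Set α)
    (h : ∀ j a, P a → (a ∈ t j ↔ a ∈ t' j)) :
    ∀ i, φ.OnlyOn P → (LTL.sat t i φ ↔ LTL.sat t' i φ) := by
  induction φ with
  | tt => intro i _; simp [LTL.sat]
  | atom a => intro i hP; simpa [LTL.sat] using h i a hP
  | conj φ ψ ih1 ih2 =>
      intro i hP
      simp [LTL.sat, ih1 i hP.1, ih2 i hP.2]
  | neg φ ih => intro i hP; simp [LTL.sat, ih i hP]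
  | next φ ih => intro i hP; simp [LTL.sat, ih (i+1) hP]
  | untl φ ψ ih1 ih2 =>
      intro i hP
      simp only [LTL.sat]
      constructor
      · rintro ⟨k, hk, hs, hall⟩
        exact ⟨k, hk, (ih2 k hP.2).1 hs, fun j hj1 hj2 => (ih1 j hP.1).1 (hall j hj1 hj2)⟩
      · rintro ⟨k, hk, hs, hall⟩
        exact ⟨k, hk, (ih2 k hP.2).2 hs, fun j hj1 hj2 => (ih1 j hP.1).2 (hall j hj1 hj2)⟩

lemma sat_ev {α : Type} (ψ : LTL α) (t : ℕ → Set α) (i : ℕ) :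
    LTL.sat t i (LTL.ev ψ) ↔ ∃ k, i ≤ k ∧ LTL.sat t k ψ := by
  simp [LTL.ev, LTL.sat]

lemma sat_glob {α : Type} (ψ : LTL α) (t : ℕ → Set α) (i : ℕ) :
    LTL.sat t i (LTL.glob ψ) ↔ ∀ k, i ≤ k → LTL.sat t k ψ := by
  simp only [LTL.glob, LTL.sat, sat_ev]
  constructor
  · intro hg k hk
    by_contra hs
    exact hg ⟨k, hk, hs⟩
  · rintro hg ⟨k, hk, hs⟩
    exact hs (hg k hk)

lemma sat_imp {α : Type} (φ ψ : LTL α) (t : ℕ → Set α) (i : ℕ) :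
    LTL.sat t i (LTL.imp φ ψ) ↔ (LTL.sat t i φ → LTL.sat t i ψ) := by
  simp only [LTL.imp, LTL.sat]
  tauto

lemma sat_biimp {α : Type} (φ ψ : LTL α) (t : ℕ → Set α) (i : ℕ) :
    LTL.sat t i (LTL.biimp φ ψ) ↔ (LTL.sat t i φ ↔ LTL.sat t i ψ) := by
  simp only [LTL.biimp, LTL.sat, sat_imp]
  tauto

lemma sat_conjList {α : Type} (l : List (LTL α)) (t : ℕ → Set α) (i : ℕ) :
    LTL.sat t i (LTL.conjList l) ↔ ∀ φ ∈ l, LTL.sat t i φ := by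
  induction l with
  | nil => simp [LTL.conjList, LTL.sat]
  | cons a l ih =>
      simp only [LTL.conjList, List.foldr] at ih ⊢
      simp [LTL.sat, ih]

lemma mem_zip2_fst {α : Type} (t₁ t₂ : ℕ → Set α) (a : α) (k : ℕ) :
    (a, (0 : Fin 2)) ∈ zipTraces 2 [t₁, t₂] k ↔ a ∈ t₁ k := by
  simp [zipTraces]

lemma pullback_zip2 {α : Type} {m : ℕ} (t₁ t₂ : ℕ → Set (α ⊕ Fin m)) :
    (fun j => embed2 m ⁻¹' zipTraces 2 [t₁, t₂] j) =
      zipTraces 2 [projTrace t₁, projTrace t₂] := by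
  funext j
  ext ⟨a, k⟩
  fin_cases k <;> simp [zipTraces, embed2, projTrace]

lemma lift_mem_KP {St D α : Type} {m : ℕ} (init : St) (κ : St → D → St)
    (ℓ : St → Set α) (τ : ℕ → St) (hτ : IsKPath init κ τ)
    (A : ℕ → Set (Fin m)) (hA : A 0 = ∅) :
    (fun i => kPLabel ℓ (τ i, A i)) ∈
      KTraces ((init, (∅ : Set (Fin m)))) (kPStep κ) (kPLabel ℓ) := by
  refine ⟨fun i => (τ i, A i), ⟨by simp [hτ.1, hA], fun i => ?_⟩, fun i => rfl⟩
  obtain ⟨d, hd⟩ := hτ.2 i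
  exact ⟨(d, A (i+1)), by simp [kPStep, hd]⟩

lemma proj_mem_K {St D α : Type} {m : ℕ} (init : St) (κ : St → D → St)
    (ℓ : St → Set α) (t : ℕ → Set (α ⊕ Fin m))
    (ht : t ∈ KTraces ((init, (∅ : Set (Fin m)))) (kPStep κ) (kPLabel ℓ)) :
    projTrace t ∈ KTraces init κ ℓ := by
  obtain ⟨τ, ⟨h0, hstep⟩, hlab⟩ := ht
  refine ⟨fun i => (τ i).1, ⟨by show (τ 0).1 = init; rw [h0], fun i => ?_⟩, fun i => ?_⟩
  · obtain ⟨d, hd⟩ := hstep i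
    exact ⟨d.1, by show (τ (i+1)).1 = _; rw [hd]; rfl⟩
  · ext a
    simp [projTrace, hlab i, kPLabel]

lemma proj_kPLabel {St α : Type} {m : ℕ} (ℓ : St → Set α) (τ : ℕ → St)
    (A : ℕ → Set (Fin m)) :
    projTrace (fun i => kPLabel ℓ (τ i, A i)) = fun i => ℓ (τ i) := by
  funext i
  ext a
  simp [projTrace, kPLabel]

end ProphAux

/-- prophecy soundness for `∀π₁.∃π₂.ψ`: for a finite set `Ξ₁`
of LTL prophecy formulas mentioning only `π₁` and fresh prophecy variables
`p^ξ` (one per `ξ ∈ Ξ₁`), we have `K ⊨ ∀π₁.∃π₂.ψ` iff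
`K^P ⊨ ∀π₁.∃π₂.((X G ⋀_{ξ∈Ξ₁} ((p^ξ)_{π₁} ↔ ξ)) → ψ)`. -/
theorem prophecy_soundness_forall_exists {St D α : Type} (init : St)
    (κ : St → D → St) (ℓ : St → Set α) (ψ : LTL (α × Fin 2))
    (Ξ : List (LTL (α × Fin 2)))
    (hΞ : ∀ ξ ∈ Ξ, LTL.OnlyOn (fun x => x.2 = (0 : Fin 2)) ξ) :
    (∀ t₁ ∈ KTraces init κ ℓ, ∃ t₂ ∈ KTraces init κ ℓ,
        LTL.sat (zipTraces 2 [t₁, t₂]) 0 ψ) ↔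
    (∀ t₁ ∈ KTraces ((init, (∅ : Set (Fin Ξ.length)))) (kPStep κ) (kPLabel ℓ),
      ∃ t₂ ∈ KTraces ((init, (∅ : Set (Fin Ξ.length)))) (kPStep κ) (kPLabel ℓ),
        LTL.sat (zipTraces 2 [t₁, t₂]) 0
          (LTL.imp (prophPremise2 Ξ) (ψ.map (embed2 Ξ.length)))) := by
  constructor
  · -- forward direction
    intro h t₁' ht₁'
    obtain ⟨t₂, ht₂, hψ⟩ := h (projTrace t₁') (proj_mem_K init κ ℓ t₁' ht₁')
    obtain ⟨τ₂, hτ₂, hlab₂⟩ := ht₂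
    refine ⟨fun i => kPLabel ℓ (τ₂ i, (∅ : Set (Fin Ξ.length))),
      lift_mem_KP init κ ℓ τ₂ hτ₂ (fun _ => ∅) rfl, ?_⟩
    rw [sat_imp]
    intro _
    rw [sat_map, pullback_zip2, proj_kPLabel]
    have ht₂eq : (fun i => ℓ (τ₂ i)) = t₂ := funext fun i => (hlab₂ i).symm
    rw [ht₂eq]
    exact hψ
  · -- backward direction
    intro h t₁ ht₁
    obtain ⟨τ₁, hτ₁, hlab₁⟩ := ht₁
    set A : ℕ → Set (Fin Ξ.length) := fun i =>
      if i = 0 then ∅ else {k | LTL.sat (zipTraces 2 [t₁, t₁]) i (Ξ.get k)} with hA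
    set t₁' : ℕ → Set (α ⊕ Fin Ξ.length) := fun i => kPLabel ℓ (τ₁ i, A i) with ht₁'def
    have ht₁' : t₁' ∈ KTraces ((init, (∅ : Set (Fin Ξ.length)))) (kPStep κ) (kPLabel ℓ) :=
      lift_mem_KP init κ ℓ τ₁ hτ₁ A (by simp [hA])
    obtain ⟨t₂', ht₂', himp⟩ := h t₁' ht₁'
    refine ⟨projTrace t₂', proj_mem_K init κ ℓ t₂' ht₂', ?_⟩
    have hproj1 : projTrace t₁' = t₁ := by
      rw [ht₁'def, proj_kPLabel]
      exact funext fun i => (hlab₁ i).symm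
    rw [sat_imp] at himp
    have hagree : ∀ (j : ℕ) (x : α × Fin 2), x.2 = (0 : Fin 2) →
        (x ∈ zipTraces 2 [t₁, t₁] j ↔ x ∈ zipTraces 2 [t₁, projTrace t₂'] j) := by
      rintro j ⟨a, k⟩ hk
      simp only at hk
      subst hk
      rw [mem_zip2_fst, mem_zip2_fst]
    have hpremise : LTL.sat (zipTraces 2 [t₁', t₂']) 0 (prophPremise2 Ξ) := by
      show LTL.sat (zipTraces 2 [t₁', t₂']) (0 + 1) _
      rw [sat_glob]
      intro i hi
      rw [sat_conjList]
      intro φ hφ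
      simp only [List.mem_map, List.mem_finRange, true_and] at hφ
      obtain ⟨k, rfl⟩ := hφ
      rw [sat_biimp]
      have hL : LTL.sat (zipTraces 2 [t₁', t₂']) i (.atom (Sum.inr k, (0 : Fin 2))) ↔
          k ∈ A i := by
        show (Sum.inr k, (0 : Fin 2)) ∈ zipTraces 2 [t₁', t₂'] i ↔ _
        rw [mem_zip2_fst]
        simp [ht₁'def, kPLabel]
      have hR : LTL.sat (zipTraces 2 [t₁', t₂']) i ((Ξ.get k).map (embed2 Ξ.length)) ↔
          LTL.sat (zipTraces 2 [t₁, t₁]) i (Ξ.get k) := by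
        rw [sat_map, pullback_zip2, hproj1]
        exact (sat_congr _ (Ξ.get k) _ _ hagree i (hΞ _ (List.get_mem Ξ k))).symm
      rw [hL, hR]
      have hine : i ≠ 0 := by omega
      simp [hA, hine]
    have hψ' := himp hpremise
    rw [sat_map, pullback_zip2, hproj1] at hψ'
    exact hψ'
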